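/- Let s = t_1 ⊕ t_2 ⊕ ... ⊕ t_k be a nonempty score sequence of length n decomposed into its strong summands, and let 1 ≤ j ≤ n-1. Then s+j (entries shifted by j modulo n and sorted) is a score sequence if and only if j = |t_ℓ| + |t_{ℓ+1}| + ... + |t_k| for some ℓ, in which case s+j = t_ℓ ⊕ ... ⊕ t_k ⊕ t_1 ⊕ ... ⊕ t_{ℓ-1}. -/

import Mathlib

/-- A score sequence: nondecreasing, entries in `[0, n-1]`, prefix sums at least
`binom k 2`, and total sum `binom n 2`. -/
def IsScoreSeq (s : List ℕ) : Prop :=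
  s.Pairwise (· ≤ ·) ∧ (∀ x ∈ s, x < s.length) ∧
    (∀ k, 0 < k → k < s.length → k.choose 2 ≤ (s.take k).sum) ∧
    s.sum = s.length.choose 2

/-- A strong score sequence: nonempty and all proper prefix-sum inequalities strict. -/
def IsStrongScoreSeq (s : List ℕ) : Prop :=
  IsScoreSeq s ∧ s ≠ [] ∧ ∀ k, 0 < k → k < s.length → k.choose 2 < (s.take k).sum

/-- Direct sum of score sequences: concatenate `u` with `v` shifted up by `u.length`. -/
def dsum (u v : List ℕ) : List ℕ := u ++ v.map (· + u.length)

/-- Iterated direct sum of a list of score sequences. -/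
def dsumAll (ts : List (List ℕ)) : List ℕ := ts.foldl dsum []

/-- `s + j`: entries shifted by `j`, reduced modulo the length, sorted nondecreasingly. -/
def shift (s : List ℕ) (j : ℕ) : List ℕ :=
  Multiset.sort ((s.map fun x => (x + j) % s.length : List ℕ) : Multiset ℕ) (· ≤ ·)


lemma choose2_add (a b : ℕ) : (a + b).choose 2 = a.choose 2 + b.choose 2 + a * b := by
  induction b with
  | zero => simp
  | succ b ih =>
    have h1 : (a + (b+1)) = (a + b) + 1 := by ring
    have h2 : ∀ n : ℕ, (n + 1).choose 2 = n.choose 2 + n := by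
      intro n; rw [Nat.choose_succ_succ]; simp [Nat.choose_one_right]; ring
    rw [h1, h2, ih, h2]; ring

lemma sum_map_add (l : List ℕ) (c : ℕ) : (l.map (· + c)).sum = l.sum + l.length * c := by
  induction l with
  | nil => simp
  | cons a l ih => simp [ih]; ring

lemma dsum_length (u v : List ℕ) : (dsum u v).length = u.length + v.length := by
  simp [dsum]

lemma dsum_nil_left (v : List ℕ) : dsum [] v = v := by simp [dsum]

lemma dsum_assoc (u v w : List ℕ) : dsum (dsum u v) w = dsum u (dsum v w) := by
  simp only [dsum, List.length_append, List.length_map, List.map_append, List.map_map,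
    List.append_assoc]
  congr 2
  apply List.map_congr_left
  intro a _
  simp only [Function.comp]
  omega

lemma foldl_dsum (x : List ℕ) (l : List (List ℕ)) :
    l.foldl dsum x = dsum x (l.foldl dsum []) := by
  induction l generalizing x with
  | nil => simp [dsum]
  | cons t l ih =>
    simp only [List.foldl_cons]
    rw [ih (dsum x t), ih (dsum [] t), dsum_nil_left, dsum_assoc]

lemma dsumAll_cons (t : List ℕ) (ts : List (List ℕ)) :
    dsumAll (t :: ts) = dsum t (dsumAll ts) := by
  simp only [dsumAll, List.foldl_cons, dsum_nil_left]
  exact foldl_dsum t ts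

lemma dsumAll_append (a b : List (List ℕ)) :
    dsumAll (a ++ b) = dsum (dsumAll a) (dsumAll b) := by
  simp only [dsumAll, List.foldl_append]
  exact foldl_dsum _ b

lemma dsumAll_length (ts : List (List ℕ)) :
    (dsumAll ts).length = (ts.map List.length).sum := by
  induction ts with
  | nil => simp [dsumAll]
  | cons t ts ih => rw [dsumAll_cons, dsum_length, ih]; simp

lemma isScoreSeq_nil : IsScoreSeq [] := by
  refine ⟨List.Pairwise.nil, ?_, ?_, ?_⟩ <;> simp

lemma take_dsum_sum (u v : List ℕ) (k : ℕ) (hk : u.length ≤ k) (hk2 : k ≤ u.length + v.length) :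
    ((dsum u v).take k).sum = u.sum + (v.take (k - u.length)).sum + (k - u.length) * u.length := by
  rw [dsum, List.take_append, List.take_of_length_le (by omega),
    List.sum_append, ← List.map_take, sum_map_add, List.length_take]
  have : min (k - u.length) v.length = k - u.length := by omega
  rw [this]; ring

lemma isScoreSeq_dsum {u v : List ℕ} (hu : IsScoreSeq u) (hv : IsScoreSeq v) :
    IsScoreSeq (dsum u v) := by
  obtain ⟨hu1, hu2, hu3, hu4⟩ := hu
  obtain ⟨hv1, hv2, hv3, hv4⟩ := hv
  have hlen : (dsum u v).length = u.length + v.length := dsum_length u v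
  have htake : ∀ k, 0 < k → k ≤ u.length → ((dsum u v).take k).sum = (u.take k).sum := by
    intro k _ hk
    rw [dsum, List.take_append]
    have : k - u.length = 0 := by omega
    simp [this]
  have hpre : ∀ k, 0 < k → k ≤ u.length → k.choose 2 ≤ ((dsum u v).take k).sum := by
    intro k hk0 hk
    rw [htake k hk0 hk]
    rcases eq_or_lt_of_le hk with h | h
    · subst h; rw [List.take_of_length_le (le_refl _), hu4]
    · exact hu3 k hk0 h
  refine ⟨?_, ?_, ?_, ?_⟩
  · rw [dsum, List.pairwise_append]
    refine ⟨hu1, List.Pairwise.map _ (fun a b h => by omega) hv1, ?_⟩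
    intro x hx y hy
    simp only [List.mem_map] at hy
    obtain ⟨z, _, rfl⟩ := hy
    have := hu2 x hx; omega
  · intro x hx
    rw [hlen]
    rw [dsum, List.mem_append] at hx
    rcases hx with hx | hx
    · have := hu2 x hx; omega
    · simp only [List.mem_map] at hx
      obtain ⟨z, hz, rfl⟩ := hx
      have := hv2 z hz; omega
  · intro k hk0 hk
    rw [hlen] at hk
    rcases le_or_gt k u.length with h | h
    · exact hpre k hk0 h
    · rw [take_dsum_sum u v k (by omega) (by omega)]
      have hc : k.choose 2 = u.length.choose 2 + (k - u.length).choose 2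
          + u.length * (k - u.length) := by
        conv_lhs => rw [show k = u.length + (k - u.length) by omega]
        rw [choose2_add]
      have hv' : (k - u.length).choose 2 ≤ (v.take (k - u.length)).sum := by
        rcases lt_or_ge (k - u.length) v.length with h2 | h2
        · exact hv3 _ (by omega) h2
        · rw [List.take_of_length_le h2, hv4]
          have : k - u.length = v.length := by omega
          rw [this]
      have hmc : u.length * (k - u.length) = (k - u.length) * u.length := Nat.mul_comm _ _
      linarith [hu4.le, hu4.ge]
  · rw [hlen, dsum, List.sum_append, sum_map_add, choose2_add, hu4, hv4]
    ring

lemma isScoreSeq_dsumAll {ts : List (List ℕ)} (h : ∀ t ∈ ts, IsScoreSeq t) :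
    IsScoreSeq (dsumAll ts) := by
  induction ts with
  | nil => exact isScoreSeq_nil
  | cons t ts ih =>
    rw [dsumAll_cons]
    exact isScoreSeq_dsum (h t (by simp)) (ih fun t' ht' => h t' (by simp [ht']))

lemma tight_iff (ts : List (List ℕ)) (hts : ∀ t ∈ ts, IsStrongScoreSeq t) (k : ℕ)
    (hk : k ≤ (dsumAll ts).length) :
    ((dsumAll ts).take k).sum = k.choose 2 ↔
      ∃ ℓ, k = ((ts.take ℓ).map List.length).sum := by
  induction ts generalizing k with
  | nil =>
    simp only [dsumAll, List.foldl_nil, List.length_nil, Nat.le_zero] at hk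
    subst hk
    simp
  | cons t rest ih =>
    rw [dsumAll_cons] at hk ⊢
    obtain ⟨⟨ht1, ht2, ht3, ht4⟩, htne, htstr⟩ := hts t (by simp)
    have htpos : 0 < t.length := List.length_pos_iff.mpr htne
    have hrest : ∀ t' ∈ rest, IsStrongScoreSeq t' := fun t' ht' => hts t' (by simp [ht'])
    rw [dsum_length] at hk
    have hRHS : ∀ ℓ, ((( t :: rest).take ℓ).map List.length).sum = 0 ∨
        ∃ ℓ', (((t :: rest).take ℓ).map List.length).sum
          = t.length + (((rest.take ℓ').map List.length).sum) := by
      intro ℓ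
      cases ℓ with
      | zero => left; simp
      | succ ℓ =>
        right
        exact ⟨ℓ, by simp only [List.take_succ_cons, List.map_cons, List.sum_cons]⟩
    rcases le_or_gt k t.length with h | h
    · -- take k of dsum = take k of t
      have htake : ((dsum t (dsumAll rest)).take k).sum = (t.take k).sum := by
        rw [dsum, List.take_append]
        have : k - t.length = 0 := by omega
        simp [this]
      rw [htake]
      rcases Nat.eq_zero_or_pos k with rfl | hk0
      · exact iff_of_true (by simp) ⟨0, by simp⟩
      rcases eq_or_lt_of_le h with rfl | hlt
      · rw [List.take_of_length_le (le_refl _)]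
        simp only [ht4, true_iff]
        exact ⟨1, by simp⟩
      · constructor
        · intro habs
          exact absurd habs (Nat.ne_of_gt (htstr k hk0 hlt))
        · rintro ⟨ℓ, hℓ⟩
          exfalso
          rcases hRHS ℓ with h0 | ⟨ℓ', h1⟩
          · omega
          · omega
    · -- k > |t| : reduce to rest
      have : ((dsum t (dsumAll rest)).take k).sum
          = t.sum + ((dsumAll rest).take (k - t.length)).sum + (k - t.length) * t.length := by
        apply take_dsum_sum t (dsumAll rest) k (by omega)
        omega
      rw [this, ht4]
      have hc : k.choose 2 = t.length.choose 2 + (k - t.length).choose 2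
          + t.length * (k - t.length) := by
        conv_lhs => rw [show k = t.length + (k - t.length) by omega]
        rw [choose2_add]
      have key : (t.length.choose 2 + ((dsumAll rest).take (k - t.length)).sum
            + (k - t.length) * t.length = k.choose 2)
          ↔ ((dsumAll rest).take (k - t.length)).sum = (k - t.length).choose 2 := by
        rw [hc]
        constructor
        · intro hh
          have : t.length * (k - t.length) = (k - t.length) * t.length := Nat.mul_comm _ _
          omega
        · intro hh
          have : t.length * (k - t.length) = (k - t.length) * t.length := Nat.mul_comm _ _
          omega
      rw [key, ih hrest (k - t.length) (by omega)]
      constructor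
      · rintro ⟨ℓ, hℓ⟩
        exact ⟨ℓ + 1, by
          simp only [List.take_succ_cons, List.map_cons, List.sum_cons]; omega⟩
      · rintro ⟨ℓ, hℓ⟩
        rcases hRHS ℓ with h0 | ⟨ℓ', h1⟩
        · omega
        · exact ⟨ℓ', by omega⟩

lemma sorted_split (s : List ℕ) (hs : s.Pairwise (· ≤ ·)) (c : ℕ) :
    ∃ m ≤ s.length, (∀ x ∈ s.take m, x < c) ∧ (∀ x ∈ s.drop m, c ≤ x) := by
  induction s with
  | nil => exact ⟨0, by simp⟩
  | cons a t ih =>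
    rw [List.pairwise_cons] at hs
    obtain ⟨ha, ht⟩ := hs
    rcases lt_or_ge a c with h | h
    · obtain ⟨m, hm, h1, h2⟩ := ih ht
      refine ⟨m + 1, by simp; omega, ?_, ?_⟩
      · intro x hx
        rw [List.take_succ_cons] at hx
        rcases List.mem_cons.mp hx with rfl | hx
        · exact h
        · exact h1 x hx
      · intro x hx
        rw [List.drop_succ_cons] at hx
        exact h2 x hx
    · refine ⟨0, by simp, by simp, ?_⟩
      intro x hx
      rw [List.drop_zero] at hx
      rcases List.mem_cons.mp hx with rfl | hx
      · exact h
      · exact le_trans h (ha x hx)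

lemma map_sub_sum (l : List ℕ) (c n : ℕ) (h : ∀ x ∈ l, n ≤ x + c) :
    (l.map (fun x => x + c - n)).sum + l.length * n = l.sum + l.length * c := by
  induction l with
  | nil => simp
  | cons a t ih =>
    have ha := h a (by simp)
    have iht := ih (fun x hx => h x (by simp [hx]))
    simp only [List.map_cons, List.sum_cons, List.length_cons]
    have : (a + c - n) + n = a + c := by omega
    -- goal: (a+c-n) + sum + (t.length+1)*n = a + sum t + (t.length+1)*c
    nlinarith [this, iht]

lemma shift_eq (s : List ℕ) (j m : ℕ) (hs : s.Pairwise (· ≤ ·)) (hlt : ∀ x ∈ s, x < s.length)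
    (hj : j ≤ s.length) (hm : m ≤ s.length)
    (h1 : ∀ x ∈ s.take m, x + j < s.length) (h2 : ∀ x ∈ s.drop m, s.length ≤ x + j) :
    shift s j = (s.drop m).map (fun x => x + j - s.length) ++ (s.take m).map (· + j) := by
  set n := s.length with hn
  set L := (s.drop m).map (fun x => x + j - n) ++ (s.take m).map (· + j) with hL
  have hmem_take : ∀ x ∈ s.take m, x ∈ s := fun x hx => List.mem_of_mem_take hx
  have hmem_drop : ∀ x ∈ s.drop m, x ∈ s := fun x hx => List.mem_of_mem_drop hx
  have hperm : List.Perm (s.map fun x => (x + j) % n) L := by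
    conv_lhs => rw [← List.take_append_drop m s]
    rw [List.map_append]
    have e1 : (s.take m).map (fun x => (x + j) % n) = (s.take m).map (· + j) := by
      apply List.map_congr_left
      intro x hx
      exact Nat.mod_eq_of_lt (h1 x hx)
    have e2 : (s.drop m).map (fun x => (x + j) % n) = (s.drop m).map (fun x => x + j - n) := by
      apply List.map_congr_left
      intro x hx
      have hxn : x < n := hlt x (hmem_drop x hx)
      have hge : n ≤ x + j := h2 x hx
      rw [Nat.mod_eq_sub_mod hge, Nat.mod_eq_of_lt (by omega)]
    rw [e1, e2]
    exact List.perm_append_comm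
  have hsortL : L.Pairwise (· ≤ ·) := by
    rw [hL, List.pairwise_append]
    refine ⟨?_, ?_, ?_⟩
    · exact List.Pairwise.map _ (fun a b h => by omega) ((hs.sublist (List.drop_sublist m s)))
    · exact List.Pairwise.map _ (fun a b h => by omega) ((hs.sublist (List.take_sublist m s)))
    · intro x hx y hy
      simp only [List.mem_map] at hx hy
      obtain ⟨a, ha, rfl⟩ := hx
      obtain ⟨b, hb, rfl⟩ := hy
      have : a < n := hlt a (hmem_drop a ha)
      omega
  have hsortS : (shift s j).Pairwise (· ≤ ·) := Multiset.pairwise_sort _ _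
  have hperm2 : List.Perm (shift s j) L := by
    have : ((shift s j : List ℕ) : Multiset ℕ) = (↑(s.map fun x => (x + j) % n) : Multiset ℕ) :=
      Multiset.sort_eq _ _
    exact (Multiset.coe_eq_coe.mp this).trans hperm
  exact List.Perm.eq_of_pairwise' hsortS hsortL hperm2

lemma arith1 (n j m DA Asum Bsum a b : ℕ) (hm : m ≤ n) (hDA : DA = n - m)
    (hj : 1 ≤ j) (hjn : j < n)
    (hA : Asum + DA * n = a + DA * j) (hB : Bsum = b + m * j)
    (hAB : Asum + Bsum = n.choose 2) (hab : a + b = n.choose 2) : m = n - j := by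
  have h1 : DA + m = n := by omega
  have e6 : DA * j + m * j = n * j := by rw [← Nat.add_mul, h1]
  have e7 : DA * n = n * j := by linarith
  have e8 : n * DA = n * j := by rw [← e7]; ring
  have : DA = j := Nat.eq_of_mul_eq_mul_left (by omega) e8
  omega

lemma arith2 (n j k Asum a b : ℕ) (hk : k = n - j) (hj1 : 1 ≤ j) (hjn : j < n)
    (hA : Asum + j * n = a + j * j) (hab : a + b = n.choose 2)
    (hCj : j.choose 2 ≤ Asum) (hCk : k.choose 2 ≤ b) : b = k.choose 2 := by
  have hch : n.choose 2 = k.choose 2 + j.choose 2 + k * j := by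
    conv_lhs => rw [show n = k + j by omega]
    rw [choose2_add]
  have hjn' : j * n = j * k + j * j := by
    rw [← Nat.mul_add]
    congr 1
    omega
  have hcomm : k * j = j * k := Nat.mul_comm _ _
  linarith

/-- For `s` decomposed into strong summands `ts`, `s+j` is a score sequence iff `j`
is the total length of a suffix of summands, in which case `s+j` is that rotation. -/
theorem shift_scoreSeq_iff_rotation (ts : List (List ℕ)) (hts : ∀ t ∈ ts, IsStrongScoreSeq t)
    (htsne : ts ≠ []) (s : List ℕ) (hs : s = dsumAll ts)
    (j : ℕ) (hj1 : 1 ≤ j) (hj2 : j ≤ s.length - 1) :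
    (IsScoreSeq (shift s j) ↔
      ∃ ℓ < ts.length, j = ((ts.drop ℓ).map List.length).sum) ∧
    (∀ ℓ < ts.length, j = ((ts.drop ℓ).map List.length).sum →
      shift s j = dsumAll (ts.drop ℓ ++ ts.take ℓ)) := by
  subst hs
  have hscore : ∀ t ∈ ts, IsScoreSeq t := fun t ht => (hts t ht).1
  obtain ⟨hsort, hlt, hpre, hsum⟩ := isScoreSeq_dsumAll hscore
  have hn1 : 0 < (dsumAll ts).length := by
    rw [dsumAll_length]
    cases ts with
    | nil => exact absurd rfl htsne
    | cons t rest =>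
      have h1 : 0 < t.length := List.length_pos_iff.mpr (hts t (by simp)).2.1
      simp only [List.map_cons, List.sum_cons]
      omega
  have hjn : j < (dsumAll ts).length := by omega
  have hsplitsum : ∀ ℓ, ((ts.take ℓ).map List.length).sum + ((ts.drop ℓ).map List.length).sum
      = (dsumAll ts).length := by
    intro ℓ
    rw [dsumAll_length, ← List.sum_append, ← List.map_append, List.take_append_drop]
  -- Part 2 : the rotation formula
  have claim : ∀ ℓ < ts.length, j = ((ts.drop ℓ).map List.length).sum →
      shift (dsumAll ts) j = dsumAll (ts.drop ℓ ++ ts.take ℓ) := by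
    intro ℓ hℓ hjs
    have hP : IsScoreSeq (dsumAll (ts.take ℓ)) :=
      isScoreSeq_dsumAll (fun t ht => hscore t (List.mem_of_mem_take ht))
    have hPlen : (dsumAll (ts.take ℓ)).length = ((ts.take ℓ).map List.length).sum :=
      dsumAll_length _
    have hQlen : (dsumAll (ts.drop ℓ)).length = j := by rw [dsumAll_length, ← hjs]
    have hkj : (dsumAll (ts.take ℓ)).length + j = (dsumAll ts).length := by
      rw [hPlen, hjs]
      exact hsplitsum ℓ
    have hSdecomp : dsumAll ts
        = dsumAll (ts.take ℓ) ++ (dsumAll (ts.drop ℓ)).map (· + (dsumAll (ts.take ℓ)).length) := by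
      conv_lhs => rw [← List.take_append_drop ℓ ts]
      rw [dsumAll_append]
      rfl
    have htk : (dsumAll ts).take (dsumAll (ts.take ℓ)).length = dsumAll (ts.take ℓ) := by
      conv_lhs => rw [hSdecomp]
      exact List.take_left' rfl
    have hdk : (dsumAll ts).drop (dsumAll (ts.take ℓ)).length
        = (dsumAll (ts.drop ℓ)).map (· + (dsumAll (ts.take ℓ)).length) := by
      conv_lhs => rw [hSdecomp]
      exact List.drop_left' rfl
    have h1 : ∀ x ∈ (dsumAll ts).take (dsumAll (ts.take ℓ)).length,
        x + j < (dsumAll ts).length := by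
      intro x hx
      rw [htk] at hx
      have := hP.2.1 x hx
      omega
    have h2 : ∀ x ∈ (dsumAll ts).drop (dsumAll (ts.take ℓ)).length,
        (dsumAll ts).length ≤ x + j := by
      intro x hx
      rw [hdk] at hx
      simp only [List.mem_map] at hx
      obtain ⟨q, _, rfl⟩ := hx
      omega
    have heq := shift_eq (dsumAll ts) j (dsumAll (ts.take ℓ)).length hsort hlt
      (by omega) (by omega) h1 h2
    rw [heq, htk, hdk, List.map_map, dsumAll_append, dsum, hQlen]
    congr 1
    exact (List.map_congr_left (fun a _ => by
      simp only [Function.comp_apply, id_eq]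
      omega)).trans (List.map_id _)
  refine ⟨⟨?_, ?_⟩, claim⟩
  · -- forward direction
    intro hshift
    obtain ⟨hsh1, hsh2, hsh3, hsh4⟩ := hshift
    obtain ⟨m, hm, hs1, hs2⟩ := sorted_split (dsumAll ts) hsort ((dsumAll ts).length - j)
    have h1 : ∀ x ∈ (dsumAll ts).take m, x + j < (dsumAll ts).length := fun x hx => by
      have := hs1 x hx; omega
    have h2 : ∀ x ∈ (dsumAll ts).drop m, (dsumAll ts).length ≤ x + j := fun x hx => by
      have := hs2 x hx; omega
    have heq := shift_eq (dsumAll ts) j m hsort hlt (by omega) hm h1 h2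
    have hlens : (shift (dsumAll ts) j).length = (dsumAll ts).length := by
      rw [heq]
      simp only [List.length_append, List.length_map, List.length_drop, List.length_take]
      omega
    have hA := map_sub_sum ((dsumAll ts).drop m) j (dsumAll ts).length h2
    have hB := sum_map_add ((dsumAll ts).take m) j
    rw [show ((dsumAll ts).take m).length = m by rw [List.length_take]; omega] at hB
    have htd : ((dsumAll ts).take m).sum + ((dsumAll ts).drop m).sum = (dsumAll ts).sum := by
      rw [← List.sum_append, List.take_append_drop]
    have hAB : (((dsumAll ts).drop m).map (fun x => x + j - (dsumAll ts).length)).sum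
        + (((dsumAll ts).take m).map (· + j)).sum = (dsumAll ts).length.choose 2 := by
      rw [← List.sum_append, ← heq, hsh4, hlens]
    have hmj : m = (dsumAll ts).length - j := by
      refine arith1 (dsumAll ts).length j m ((dsumAll ts).drop m).length
        (((dsumAll ts).drop m).map (fun x => x + j - (dsumAll ts).length)).sum
        (((dsumAll ts).take m).map (· + j)).sum
        ((dsumAll ts).drop m).sum ((dsumAll ts).take m).sum
        hm List.length_drop hj1 hjn hA hB hAB (by omega)
    -- tightness at position m = n - j
    have hDAj : ((dsumAll ts).drop m).length = j := by
      rw [List.length_drop]; omega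
    have htakeshift : (shift (dsumAll ts) j).take j
        = ((dsumAll ts).drop m).map (fun x => x + j - (dsumAll ts).length) := by
      rw [heq]
      apply List.take_left'
      rw [List.length_map, hDAj]
    have hCj : j.choose 2 ≤ (((dsumAll ts).drop m).map
        (fun x => x + j - (dsumAll ts).length)).sum := by
      rw [← htakeshift]
      exact hsh3 j hj1 (by omega)
    have hCk : m.choose 2 ≤ ((dsumAll ts).take m).sum := hpre m (by omega) (by omega)
    have hA' : (((dsumAll ts).drop m).map (fun x => x + j - (dsumAll ts).length)).sum
        + j * (dsumAll ts).length = ((dsumAll ts).drop m).sum + j * j := by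
      rw [hDAj] at hA
      exact hA
    have htight : ((dsumAll ts).take m).sum = m.choose 2 := by
      refine arith2 (dsumAll ts).length j m _ ((dsumAll ts).drop m).sum _ hmj hj1 hjn hA'
        (by omega) hCj hCk
    rw [hmj] at htight
    obtain ⟨ℓ, hℓ⟩ := (tight_iff ts hts ((dsumAll ts).length - j) (by omega)).mp htight
    have hℓlt : ℓ < ts.length := by
      by_contra hcon
      push_neg at hcon
      rw [List.take_of_length_le hcon] at hℓ
      rw [← dsumAll_length] at hℓ
      omega
    refine ⟨ℓ, hℓlt, ?_⟩
    have := hsplitsum ℓ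
    omega
  · rintro ⟨ℓ, hℓ, hjs⟩
    rw [claim ℓ hℓ hjs]
    refine isScoreSeq_dsumAll ?_
    intro t ht
    rcases List.mem_append.mp ht with h | h
    · exact hscore t (List.mem_of_mem_drop h)
    · exact hscore t (List.mem_of_mem_take h)
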